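/- (Linearisation Lemma) Let P be a Horn clause program, k ∈ ℕ, and let S be any interpretation of the indexed atoms of dimension index at most k. Then the program LINEARIZE(P^{≤k+1}, S) is linear, i.e., every clause of LINEARIZE(P^{≤k+1}, S) has at most one atom in its body. -/
import Mathlib


/-- An indexed atom `a^{=d}` (when `isExact = true`) or `a^{≤d}` (when `isExact = false`),
where `d` is the dimension index. -/
structure IAtom (β : Type) where
  atom : β
  idx : ℕ
  isExact : Bool
deriving DecidableEq

/-- A (ground) Horn clause program over atoms `γ`: a set of clauses `(head, body)`. -/
abbrev Program (γ : Type) := Set (γ × List γ)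

/-- The at-most-`k`-dimension program `P^{≤k}`. -/
def kdim {β : Type} (P : Program β) (k : ℕ) : Program (IAtom β) :=
  { c |
    -- (i) fact clauses
    (∃ h, (h, ([] : List β)) ∈ P ∧ c = (⟨h, 0, true⟩, [])) ∨
    -- (ii) linear clauses
    (∃ h b d, (h, [b]) ∈ P ∧ d ≤ k ∧
      c = (⟨h, d, true⟩, [⟨b, d, true⟩])) ∨
    -- (iii) non-linear clauses, one body atom of exact dimension d
    (∃ h B d j, (h, B) ∈ P ∧ 1 < B.length ∧ 1 ≤ d ∧ d ≤ k ∧ j < B.length ∧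
      c = ((⟨h, d, true⟩ : IAtom β),
        B.mapIdx fun i b =>
          if i = j then (⟨b, d, true⟩ : IAtom β) else ⟨b, d - 1, false⟩)) ∨
    -- (iv) non-linear clauses, two body atoms of exact dimension d-1
    (∃ h B d, ∃ J : Finset ℕ, (h, B) ∈ P ∧ 1 < B.length ∧ 1 ≤ d ∧ d ≤ k ∧
      J.card = 2 ∧ (∀ i ∈ J, i < B.length) ∧ (2 ≤ d ∨ B.length = 2) ∧
      c = ((⟨h, d, true⟩ : IAtom β),
        B.mapIdx fun i b =>
          if i ∈ J then (⟨b, d - 1, true⟩ : IAtom β) else ⟨b, d - 2, false⟩)) ∨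
    -- (v) ε-clauses
    (∃ h d e, e ≤ d ∧ d ≤ k ∧
      c = ((⟨h, d, false⟩ : IAtom β), [(⟨h, e, true⟩ : IAtom β)])) }

/-- `LINEARIZE(Q, S)`: keep a clause iff every body atom of dimension index `≤ k`
belongs to `S`, deleting those body atoms from the kept clause. -/
def linearize {β : Type} (Q : Program (IAtom β)) (k : ℕ) (S : Set (IAtom β)) :
    Program (IAtom β) :=
  { c | ∃ c' ∈ Q, (∀ a ∈ c'.2, a.idx ≤ k → a ∈ S) ∧
        c = (c'.1, c'.2.filter fun a => decide (k < a.idx)) }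

lemma filter_mapIdx_nil {α γ : Type*} (l : List α) (f : ℕ → α → γ) (p : γ → Bool)
    (h : ∀ i a, p (f i a) = false) : (l.mapIdx f).filter p = [] := by
  induction l generalizing f with
  | nil => simp
  | cons a l ih =>
    simp [List.mapIdx_cons, h, ih (fun i => f (i+1)) (fun i a => h (i+1) a)]

lemma filter_mapIdx_le_one {α γ : Type*} (l : List α) (f : ℕ → α → γ) (p : γ → Bool)
    (j : ℕ) (h : ∀ i, i ≠ j → ∀ a, p (f i a) = false) :
    ((l.mapIdx f).filter p).length ≤ 1 := by
  induction l generalizing f j with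
  | nil => simp
  | cons a l ih =>
    rw [List.mapIdx_cons]
    cases j with
    | zero =>
      rw [List.filter_cons]
      have : (List.mapIdx (fun i => f (i+1)) l).filter p = [] :=
        filter_mapIdx_nil l _ p (fun i a => h (i+1) (by simp) a)
      split <;> simp [this]
    | succ j' =>
      rw [List.filter_cons, h 0 (by simp)]
      exact ih (fun i => f (i+1)) j' (fun i hi a => h (i+1) (by omega) a)

/-- Linearisation Lemma: for any interpretation `S` of the indexed atoms
of dimension index at most `k`, the program `LINEARIZE(P^{≤k+1}, S)` is linear. -/
theorem linearize_linear {β : Type} (fbl : β) (P : Program β)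
    (hP : ∀ c ∈ P, fbl ∉ c.2) (k : ℕ)
    (S : Set (IAtom β)) (hS : ∀ a ∈ S, a.idx ≤ k) :
    ∀ c ∈ linearize (kdim P (k + 1)) k S, c.2.length ≤ 1 := by
  rintro c ⟨c', hc', _, rfl⟩
  rcases hc' with ⟨h, _, rfl⟩ | ⟨h, b, d, _, _, rfl⟩ |
    ⟨h, B, d, j, _, _, hd1, hdk, _, rfl⟩ |
    ⟨h, B, d, J, _, _, hd1, hdk, _, _, _, rfl⟩ | ⟨h, d, e, _, _, rfl⟩
  · simp
  · exact le_trans (List.length_filter_le _ _) (by simp)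
  · exact filter_mapIdx_le_one B _ _ j (by
      intro i hi a
      simp only [if_neg hi, decide_eq_false_iff_not, not_lt]
      omega)
  · have : _ = ([] : List (IAtom β)) := filter_mapIdx_nil B
      (fun i b => if i ∈ J then (⟨b, d - 1, true⟩ : IAtom β) else ⟨b, d - 2, false⟩)
      (fun a => decide (k < a.idx)) (by
        intro i a
        by_cases hiJ : i ∈ J <;> simp only [hiJ, if_true, if_false,
          decide_eq_false_iff_not, not_lt] <;> omega)
    simp [this]
  · exact le_trans (List.length_filter_le _ _) (by simp)
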